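/- The map Ψ(z) = z²/2 - log z (principal branch) is injective on the upper half-plane ℂ⁺, and its image is ℂ ∖ (D₁ ∪ D₂) where D₁ = {p ∈ ℝ : p ≥ 1/2} and D₂ = {p - iπ : p ≥ 1/2}. -/

import Mathlib

open Complex Set Real

noncomputable def Psi (z : ℂ) : ℂ := z ^ 2 / 2 - Complex.log z

lemma psi_hasDerivAt {z : ℂ} (hz : z.im ≠ 0) :
    HasDerivAt Psi (z - z⁻¹) z := by
  have h1 : HasDerivAt (fun z : ℂ => z ^ 2 / 2) z z := by
    simpa using (((hasDerivAt_pow 2 z)).div_const 2)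
  have h2 : HasDerivAt Complex.log z⁻¹ z :=
    Complex.hasDerivAt_log (Complex.mem_slitPlane_iff.2 (Or.inr hz))
  exact h1.sub h2

lemma im_deriv_pos {z : ℂ} (hz : 0 < z.im) : 0 < (z - z⁻¹).im := by
  have hz0 : z ≠ 0 := fun h => by simp [h] at hz
  have : (z⁻¹).im = -z.im / Complex.normSq z := by
    simp [Complex.inv_im]
  have hn : 0 < Complex.normSq z := Complex.normSq_pos.2 hz0
  rw [Complex.sub_im, this]
  have : 0 < z.im / Complex.normSq z := div_pos hz hn
  rw [neg_div]
  linarith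

lemma psi_injOn : Set.InjOn Psi {z : ℂ | 0 < z.im} := by
  intro z₁ h₁ z₂ h₂ heq
  by_contra hne
  set d : ℂ := z₂ - z₁ with hd
  have hdne : d ≠ 0 := sub_ne_zero.2 (Ne.symm hne)
  set γ : ℝ → ℂ := fun t => z₁ + (t : ℂ) * d with hγ
  have hmem : ∀ t ∈ Set.uIcc (0:ℝ) 1, 0 < (γ t).im := by
    intro t ht
    rw [Set.uIcc_of_le (by norm_num)] at ht
    have h : (γ t).im = (1 - t) * z₁.im + t * z₂.im := by
      simp [hγ, hd, Complex.add_im, Complex.mul_im, Complex.sub_im]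
      ring
    rw [h]
    rcases eq_or_lt_of_le ht.1 with h0 | h0
    · simp [← h0]; exact h₁
    · have : 0 < t * z₂.im := mul_pos h0 h₂
      have : 0 ≤ (1 - t) * z₁.im := mul_nonneg (by linarith [ht.2]) h₁.le
      linarith
  have hderiv : ∀ t ∈ Set.uIcc (0:ℝ) 1,
      HasDerivAt (fun t : ℝ => Psi (γ t)) ((γ t - (γ t)⁻¹) * d) t := by
    intro t ht
    have hγt : HasDerivAt (fun w : ℂ => z₁ + w * d) d ((t:ℂ)) := by
      simpa using ((hasDerivAt_id ((t:ℂ))).mul_const d).const_add z₁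
    have h1 : HasDerivAt (fun w : ℂ => Psi (z₁ + w * d)) ((γ t - (γ t)⁻¹) * d) ((t : ℂ)) :=
      HasDerivAt.comp ((t:ℂ)) (psi_hasDerivAt (hmem t ht).ne') hγt
    exact h1.comp_ofReal
  have hγc : Continuous γ := by continuity
  have hcont₀ : ContinuousOn (fun t : ℝ => γ t - (γ t)⁻¹) (Set.uIcc (0:ℝ) 1) :=
    (hγc.continuousOn).sub (ContinuousOn.inv₀ hγc.continuousOn
      (fun t ht => ne_of_apply_ne Complex.im (by simpa using (hmem t ht).ne')))
  have hcont : ContinuousOn (fun t : ℝ => (γ t - (γ t)⁻¹) * d) (Set.uIcc (0:ℝ) 1) :=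
    hcont₀.mul continuousOn_const
  have hint : IntervalIntegrable (fun t : ℝ => (γ t - (γ t)⁻¹) * d) MeasureTheory.volume 0 1 :=
    hcont.intervalIntegrable
  have key : (∫ t in (0:ℝ)..1, (γ t - (γ t)⁻¹) * d) = Psi (γ 1) - Psi (γ 0) :=
    intervalIntegral.integral_eq_sub_of_hasDerivAt hderiv hint
  have hγ0 : γ 0 = z₁ := by simp [hγ]
  have hγ1 : γ 1 = z₂ := by simp [hγ, hd]
  rw [hγ0, hγ1, heq, sub_self] at key
  rw [intervalIntegral.integral_mul_const] at key
  have hI : (∫ t in (0:ℝ)..1, (γ t - (γ t)⁻¹)) = 0 := by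
    rcases mul_eq_zero.1 key with h | h
    · exact h
    · exact absurd h hdne
  have hint2 : IntervalIntegrable (fun t : ℝ => γ t - (γ t)⁻¹) MeasureTheory.volume 0 1 := by
    have := hint.div_const d
    simpa [mul_div_assoc, div_self hdne] using this
  have him : (∫ t in (0:ℝ)..1, (γ t - (γ t)⁻¹).im) = 0 := by
    have := Complex.imCLM.intervalIntegral_comp_comm hint2
    simp only [Complex.imCLM_apply] at this
    rw [this, hI]; simp
  have hpos : 0 < (∫ t in (0:ℝ)..1, (γ t - (γ t)⁻¹).im) := by
    apply intervalIntegral.intervalIntegral_pos_of_pos_on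
    · exact (Complex.continuous_im.comp_continuousOn hcont₀).intervalIntegrable
    · intro t ht
      exact im_deriv_pos (hmem t (by rw [Set.uIcc_of_le (by norm_num)]; exact ⟨ht.1.le, ht.2.le⟩))
    · norm_num
  rw [him] at hpos; exact lt_irrefl 0 hpos

noncomputable def gfun (θ : ℝ) : ℝ :=
  θ * Real.cos (2*θ) / Real.sin (2*θ) - Real.log (2*θ) / 2 + Real.log (Real.sin (2*θ)) / 2

lemma sin2_pos {θ : ℝ} (h0 : 0 < θ) (h1 : θ < π/2) : 0 < Real.sin (2*θ) :=
  Real.sin_pos_of_pos_of_lt_pi (by linarith) (by linarith)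

lemma gfun_hasDeriv {θ : ℝ} (h0 : 0 < θ) (h1 : θ < π/2) :
    HasDerivAt gfun
      (((Real.cos (2*θ) - θ * (2 * Real.sin (2*θ))) * Real.sin (2*θ)
          - θ * Real.cos (2*θ) * (2 * Real.cos (2*θ))) / (Real.sin (2*θ))^2
        - (1/(2*θ)) + Real.cos (2*θ) / Real.sin (2*θ)) θ := by
  have hs : 0 < Real.sin (2*θ) := sin2_pos h0 h1
  have hc2 : HasDerivAt (fun x : ℝ => Real.cos (2*x)) (-(2 * Real.sin (2*θ))) θ := by
    have h := (Real.hasDerivAt_cos (2*θ)).comp θ ((hasDerivAt_id θ).const_mul 2)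
    simp only [Function.comp_def] at h
    exact h.congr_deriv (by ring)
  have hs2 : HasDerivAt (fun x : ℝ => Real.sin (2*x)) (2 * Real.cos (2*θ)) θ := by
    have h := (Real.hasDerivAt_sin (2*θ)).comp θ ((hasDerivAt_id θ).const_mul 2)
    simp only [Function.comp_def] at h
    exact h.congr_deriv (by ring)
  have hnum : HasDerivAt (fun x : ℝ => x * Real.cos (2*x))
      (Real.cos (2*θ) - θ * (2 * Real.sin (2*θ))) θ := by
    have := (hasDerivAt_id θ).mul hc2
    exact this.congr_deriv (by simp only [id]; ring)
  have hq : HasDerivAt (fun x : ℝ => x * Real.cos (2*x) / Real.sin (2*x))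
      (((Real.cos (2*θ) - θ * (2 * Real.sin (2*θ))) * Real.sin (2*θ)
          - θ * Real.cos (2*θ) * (2 * Real.cos (2*θ))) / (Real.sin (2*θ))^2) θ :=
    hnum.div hs2 hs.ne'
  have hl1 : HasDerivAt (fun x : ℝ => Real.log (2*x) / 2) (1/(2*θ)) θ := by
    have h2θ : (2:ℝ)*θ ≠ 0 := by positivity
    have := ((Real.hasDerivAt_log h2θ).comp θ ((hasDerivAt_id θ).const_mul 2)).div_const 2
    exact this.congr_deriv (by field_simp)
  have hl2 : HasDerivAt (fun x : ℝ => Real.log (Real.sin (2*x)) / 2)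
      (Real.cos (2*θ) / Real.sin (2*θ)) θ := by
    have := ((Real.hasDerivAt_log hs.ne').comp θ hs2).div_const 2
    exact this.congr_deriv (by field_simp)
  exact (hq.sub hl1).add hl2

lemma gfun_deriv_neg {θ : ℝ} (h0 : 0 < θ) (h1 : θ < π/2) :
    (((Real.cos (2*θ) - θ * (2 * Real.sin (2*θ))) * Real.sin (2*θ)
        - θ * Real.cos (2*θ) * (2 * Real.cos (2*θ))) / (Real.sin (2*θ))^2
      - (1/(2*θ)) + Real.cos (2*θ) / Real.sin (2*θ)) < 0 := by
  have hs : 0 < Real.sin (2*θ) := sin2_pos h0 h1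
  set s := Real.sin (2*θ)
  set c := Real.cos (2*θ)
  have hsc : s^2 + c^2 = 1 := Real.sin_sq_add_cos_sq (2*θ)
  have key : ((c - θ * (2 * s)) * s - θ * c * (2 * c)) / s^2 - (1/(2*θ)) + c / s
      = (((c - θ * (2 * s)) * s - θ * c * (2 * c)) * (2*θ) - s^2 + c*s*(2*θ)) / (s^2*(2*θ)) := by
    field_simp
  rw [key]
  apply div_neg_of_neg_of_pos
  · nlinarith [sq_nonneg (s - 2*θ*c), sq_nonneg (θ*s), mul_pos h0 (mul_pos hs hs)]
  · positivity

lemma gfun_strictAnti : StrictAntiOn gfun (Set.Ioo 0 (π/2)) := by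
  apply strictAntiOn_of_deriv_neg (convex_Ioo _ _)
  · intro x hx
    exact (gfun_hasDeriv hx.1 hx.2).differentiableAt.continuousAt.continuousWithinAt
  · intro x hx
    rw [interior_Ioo] at hx
    rw [(gfun_hasDeriv hx.1 hx.2).deriv]
    exact gfun_deriv_neg hx.1 hx.2

lemma gfun_tendsto : Filter.Tendsto gfun (nhdsWithin 0 (Set.Ioi 0)) (nhds (1/2)) := by
  have h2θ : Filter.Tendsto (fun θ : ℝ => 2*θ) (nhdsWithin 0 (Set.Ioi 0))
      (nhdsWithin 0 {x : ℝ | x ≠ 0}) := by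
    apply tendsto_nhdsWithin_of_tendsto_nhds_of_eventually_within
    · have : Filter.Tendsto (fun θ : ℝ => 2*θ) (nhds 0) (nhds 0) := by
        simpa using (continuous_mul_left (2:ℝ)).tendsto (0:ℝ)
      exact this.mono_left nhdsWithin_le_nhds
    · filter_upwards [self_mem_nhdsWithin] with θ (hθ : (0:ℝ) < θ)
      show 2*θ ≠ 0
      positivity
  have hslope : Filter.Tendsto (fun y : ℝ => Real.sin y / y) (nhdsWithin 0 {x : ℝ | x ≠ 0})
      (nhds 1) := by
    have := hasDerivAt_iff_tendsto_slope.1 (Real.hasDerivAt_sin 0)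
    rw [Real.cos_zero] at this
    apply this.congr'
    filter_upwards [self_mem_nhdsWithin] with y hy
    rw [slope_def_field]
    rw [Real.sin_zero, sub_zero, sub_zero]
  have hsinc : Filter.Tendsto (fun θ : ℝ => Real.sin (2*θ) / (2*θ))
      (nhdsWithin 0 (Set.Ioi 0)) (nhds 1) := hslope.comp h2θ
  have hcos : Filter.Tendsto (fun θ : ℝ => Real.cos (2*θ)) (nhdsWithin 0 (Set.Ioi 0))
      (nhds 1) := by
    have : Filter.Tendsto (fun θ : ℝ => Real.cos (2*θ)) (nhds 0) (nhds 1) := by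
      have hc : Continuous (fun θ : ℝ => Real.cos (2*θ)) :=
        Real.continuous_cos.comp (continuous_const.mul continuous_id)
      simpa using hc.tendsto (0:ℝ)
    exact this.mono_left nhdsWithin_le_nhds
  have t1 : Filter.Tendsto (fun θ : ℝ => θ * Real.cos (2*θ) / Real.sin (2*θ))
      (nhdsWithin 0 (Set.Ioi 0)) (nhds (1/2)) := by
    have h := (hcos.div_const 2).div hsinc one_ne_zero
    rw [div_one] at h
    apply h.congr'
    filter_upwards [self_mem_nhdsWithin, Ioo_mem_nhdsGT_of_mem (Set.left_mem_Ico.2 (by positivity : (0:ℝ) < π/2))] with θ hθ hθ'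
    have h0 : (0:ℝ) < θ := hθ
    have hs : 0 < Real.sin (2*θ) := sin2_pos h0 hθ'.2
    simp only [Pi.div_apply]
    field_simp
  have t2 : Filter.Tendsto (fun θ : ℝ => Real.log (Real.sin (2*θ)) / 2 - Real.log (2*θ) / 2)
      (nhdsWithin 0 (Set.Ioi 0)) (nhds 0) := by
    have hlog : Filter.Tendsto (fun θ : ℝ => Real.log (Real.sin (2*θ) / (2*θ)) / 2)
        (nhdsWithin 0 (Set.Ioi 0)) (nhds 0) := by
      have := ((Real.continuousAt_log one_ne_zero).tendsto.comp hsinc).div_const 2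
      simpa using this
    apply hlog.congr'
    filter_upwards [self_mem_nhdsWithin, Ioo_mem_nhdsGT_of_mem (Set.left_mem_Ico.2 (by positivity : (0:ℝ) < π/2))] with θ hθ hθ'
    have h0 : (0:ℝ) < θ := hθ
    have hs : 0 < Real.sin (2*θ) := sin2_pos h0 hθ'.2
    rw [Real.log_div hs.ne' (by positivity)]
    ring
  have := t1.add t2
  rw [add_zero] at this
  apply this.congr
  intro θ
  simp only [gfun]
  ring

lemma gfun_lt_half {θ : ℝ} (h0 : 0 < θ) (h1 : θ < π/2) : gfun θ < 1/2 := by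
  have hle : ∀ x ∈ Set.Ioo 0 (π/2), gfun x ≤ 1/2 := by
    intro x hx
    apply ge_of_tendsto gfun_tendsto
    filter_upwards [Ioo_mem_nhdsGT_of_mem (Set.left_mem_Ico.2 hx.1)] with y hy
    exact (gfun_strictAnti ⟨hy.1, hy.2.trans hx.2⟩ hx (hy.2)).le
  have hmid : gfun θ < gfun (θ/2) :=
    gfun_strictAnti ⟨by positivity, by linarith⟩ ⟨h0, h1⟩ (by linarith)
  exact hmid.trans_le (hle _ ⟨by positivity, by linarith⟩)

lemma psi_im_eq (z : ℂ) : (Psi z).im = z.re * z.im - Complex.arg z := by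
  simp [Psi, Complex.div_im, pow_two, Complex.mul_im, Complex.mul_re, Complex.log_im,
    Complex.normSq]
  ring

lemma psi_re_eq (z : ℂ) : (Psi z).re = (z.re^2 - z.im^2)/2 - Real.log (‖z‖) := by
  simp [Psi, Complex.div_re, pow_two, Complex.mul_im, Complex.mul_re, Complex.log_re,
    Complex.normSq]

/-- If `r^2 = 2φ/sin(2φ)` then the real part expression equals `gfun φ`. -/
lemma re_eq_gfun {r φ : ℝ} (hr : 0 < r) (h0 : 0 < φ) (h1 : φ < π/2)
    (hrel : r^2 * Real.sin (2*φ) = 2*φ) :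
    r^2 * Real.cos (2*φ) / 2 - Real.log r = gfun φ := by
  have hs : 0 < Real.sin (2*φ) := sin2_pos h0 h1
  have hr2 : r^2 = 2*φ / Real.sin (2*φ) := by
    field_simp
    linarith
  have hlogr : Real.log r = (Real.log (2*φ) - Real.log (Real.sin (2*φ))) / 2 := by
    have h2 : Real.log (r^2) = 2 * Real.log r := by
      rw [Real.log_pow]; push_cast; ring
    have h3 : Real.log (r^2) = Real.log (2*φ) - Real.log (Real.sin (2*φ)) := by
      rw [hr2, Real.log_div (by positivity) hs.ne']
    linarith
  rw [hr2, hlogr, gfun]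
  field_simp
  ring

lemma psi_forward {z : ℂ} (hz : 0 < z.im) :
    ((Psi z).im = 0 → (Psi z).re < 1/2) ∧ ((Psi z).im = -π → (Psi z).re < 1/2) := by
  have hz0 : z ≠ 0 := fun h => by simp [h] at hz
  set r := ‖z‖ with hrdef
  have hr : 0 < r := norm_pos_iff.mpr hz0
  set θ := Complex.arg z with hθdef
  have hre : z.re = r * Real.cos θ := by
    rw [Complex.cos_arg hz0]; field_simp; rfl
  have him : z.im = r * Real.sin θ := by
    rw [Complex.sin_arg]; field_simp; rfl
  have hsinθ : 0 < Real.sin θ := by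
    by_contra h
    push_neg at h
    nlinarith [him ▸ hz]
  have hθ0 : 0 < θ := by
    by_contra h
    push_neg at h
    have := Real.sin_nonpos_of_nonpos_of_neg_pi_le h (Complex.neg_pi_lt_arg z).le
    linarith
  have hθπ : θ < π := by
    rcases lt_or_eq_of_le (Complex.arg_le_pi z) with h | h
    · exact h
    · exfalso
      rw [hθdef] at hsinθ
      rw [h] at hsinθ
      simp at hsinθ
  have hrei : (Psi z).re = r^2 * (Real.cos θ ^ 2 - Real.sin θ ^ 2) / 2 - Real.log r := by
    rw [psi_re_eq, hre, him]
    ring_nf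
    rfl
  have hcos2 : Real.cos θ ^ 2 - Real.sin θ ^ 2 = Real.cos (2*θ) := by
    rw [Real.cos_two_mul]
    nlinarith [Real.sin_sq_add_cos_sq θ]
  have hxy : z.re * z.im = r^2 * Real.sin (2*θ) / 2 := by
    rw [hre, him, Real.sin_two_mul]
    ring
  constructor
  · -- Im Psi = 0
    intro h
    rw [psi_im_eq] at h
    have hxyθ : r^2 * Real.sin (2*θ) / 2 = θ := by rw [← hxy]; linarith
    have hxpos : 0 < z.re := by
      have : 0 < z.re * z.im := by rw [hxy, hxyθ]; exact hθ0
      by_contra hc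
      push_neg at hc
      nlinarith
    have hcosθ : 0 < Real.cos θ := by
      by_contra hc
      push_neg at hc
      nlinarith [hre ▸ hxpos]
    have hθhalf : θ < π/2 := by
      by_contra hc
      push_neg at hc
      have := Real.cos_nonpos_of_pi_div_two_le_of_le hc (by linarith)
      linarith
    have hrel : r^2 * Real.sin (2*θ) = 2*θ := by linarith
    rw [hrei, hcos2, re_eq_gfun hr hθ0 hθhalf hrel]
    exact gfun_lt_half hθ0 hθhalf
  · -- Im Psi = -π
    intro h
    rw [psi_im_eq] at h
    have hxyθ : r^2 * Real.sin (2*θ) / 2 = θ - π := by rw [← hxy]; linarith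
    set φ := π - θ with hφdef
    have hφ0 : 0 < φ := by simp [hφdef]; linarith
    have hs2 : Real.sin (2*θ) = -Real.sin (2*φ) := by
      have : 2*θ = 2*π - 2*φ := by rw [hφdef]; ring
      rw [this, Real.sin_two_pi_sub]
    have hc2 : Real.cos (2*θ) = Real.cos (2*φ) := by
      have : 2*θ = 2*π - 2*φ := by rw [hφdef]; ring
      rw [this, Real.cos_two_pi_sub]
    have hxneg : z.re < 0 := by
      have : z.re * z.im = θ - π := by rw [hxy]; linarith
      by_contra hc
      push_neg at hc
      nlinarith
    have hcosθ : Real.cos θ < 0 := by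
      by_contra hc
      push_neg at hc
      nlinarith [hre ▸ hxneg]
    have hφhalf : φ < π/2 := by
      have : π/2 < θ := by
        by_contra hc
        push_neg at hc
        have := Real.cos_nonneg_of_mem_Icc ⟨by linarith, hc⟩
        linarith
      simp [hφdef]; linarith
    have hrel : r^2 * Real.sin (2*φ) = 2*φ := by
      have := hxyθ
      rw [hs2] at this
      rw [hφdef]
      linarith
    rw [hrei, hcos2, hc2, re_eq_gfun hr hφ0 hφhalf hrel]
    exact gfun_lt_half hφ0 hφhalf

/-- real bound: x²/2 - log x ≥ 1/2 for x > 0 -/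
lemma real_bound {x : ℝ} (hx : 0 < x) : 1/2 ≤ x^2/2 - Real.log x := by
  have h := Real.log_le_sub_one_of_pos hx
  nlinarith [sq_nonneg (x - 1)]

/-- abs of complex log bound -/
lemma abs_log_le (z : ℂ) : ‖Complex.log z‖ ≤ |Real.log (‖z‖)| + π := by
  rw [Complex.log]
  refine (norm_add_le _ _).trans ?_
  gcongr
  · simp
  · rw [norm_mul]
    simp [Complex.norm_real]
    exact Complex.abs_arg_le_pi z

/-- lower bound on |Psi| for large |z| -/
lemma psi_large {z : ℂ} {B : ℝ} (hB : 1 ≤ B) (hz : 2*B + 2*π + 2 ≤ ‖z‖) :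
    B ≤ ‖Psi z‖ := by
  set a := ‖z‖ with ha
  have hπ : (3:ℝ) < π := by linarith [Real.pi_gt_three]
  have ha2 : 2 ≤ a := by linarith
  have h1 : ‖z^2/2‖ = a^2/2 := by
    rw [norm_div, norm_pow]
    norm_num
    rfl
  have hlog : ‖Complex.log z‖ ≤ a - 1 + π := by
    refine (abs_log_le z).trans ?_
    have h2 : Real.log a ≤ a - 1 := Real.log_le_sub_one_of_pos (by linarith)
    have h3 : 0 ≤ Real.log a := Real.log_nonneg (by linarith)
    rw [_root_.abs_of_nonneg h3]
    linarith
  have : a^2/2 - (a - 1 + π) ≤ ‖Psi z‖ := by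
    calc a^2/2 - (a - 1 + π) ≤ ‖z^2/2‖ - ‖Complex.log z‖ := by
          rw [h1]; linarith
      _ ≤ ‖z^2/2 - Complex.log z‖ := norm_sub_norm_le _ _
      _ = ‖Psi z‖ := rfl
  nlinarith [sq_nonneg (a - 2)]

/-- lower bound on |Psi| for small |z| -/
lemma psi_small {z : ℂ} {B : ℝ} (hB : 1 ≤ B) (hz0 : z ≠ 0)
    (hz : ‖z‖ ≤ Real.exp (-(B+2))) : B ≤ ‖Psi z‖ := by
  set a := ‖z‖ with ha
  have ha0 : 0 < a := norm_pos_iff.mpr hz0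
  have hae : a ≤ Real.exp (-(B+2)) := hz
  have ha1 : a ≤ 1 := hae.trans (by
    rw [Real.exp_le_one_iff]; linarith)
  have hloga : Real.log a ≤ -(B+2) := by
    calc Real.log a ≤ Real.log (Real.exp (-(B+2))) := Real.log_le_log ha0 hae
      _ = -(B+2) := Real.log_exp _
  have habs : B + 2 ≤ ‖Complex.log z‖ := by
    have h1 : |(Complex.log z).re| ≤ ‖Complex.log z‖ := Complex.abs_re_le_norm _
    rw [Complex.log_re] at h1
    have : B + 2 ≤ |Real.log a| := by
      rw [_root_.abs_of_nonpos (by linarith)]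
      linarith
    linarith
  have h2 : ‖z^2/2‖ ≤ 1/2 := by
    rw [norm_div, norm_pow]
    simp only [Complex.norm_two]
    nlinarith
  have : ‖Complex.log z‖ - ‖z^2/2‖ ≤ ‖Psi z‖ := by
    have h3 := norm_sub_norm_le (Complex.log z) (z^2/2)
    have h4 : ‖Complex.log z - z^2/2‖ = ‖Psi z‖ := by
      rw [show Psi z = z^2/2 - Complex.log z from rfl]
      exact norm_sub_rev _ _
    linarith
  linarith

lemma psi_continuousOn {K : Set ℂ} (hK : ∀ z ∈ K, z ≠ 0 ∧ 0 ≤ z.im) :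
    ContinuousOn Psi K := by
  intro z hz
  obtain ⟨hz0, hzim⟩ := hK z hz
  have hpoly : ContinuousWithinAt (fun z : ℂ => z^2/2) K z :=
    ((continuous_pow 2).div_const 2).continuousWithinAt
  apply hpoly.sub
  by_cases hslit : z ∈ Complex.slitPlane
  · exact (Complex.differentiableAt_log hslit).continuousAt.continuousWithinAt
  · have h : z.re < 0 ∧ z.im = 0 := by
      rw [Complex.mem_slitPlane_iff] at hslit
      push_neg at hslit
      refine ⟨lt_of_le_of_ne hslit.1 ?_, hslit.2⟩
      intro h
      exact hz0 (Complex.ext h hslit.2)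
    exact (Complex.continuousWithinAt_log_of_re_neg_of_im_zero h.1 h.2).mono
      (fun w hw => (hK w hw).2)

lemma S_preconnected : IsPreconnected (Set.univ \ ({w : ℂ | w.im = 0 ∧ 1 / 2 ≤ w.re} ∪
    {w : ℂ | w.im = -Real.pi ∧ 1 / 2 ≤ w.re})) := by
  set U₀ : Set ℂ := {w : ℂ | w.re < 1/2}
  set U₁ : Set ℂ := {w : ℂ | 0 < w.im}
  set U₂ : Set ℂ := {w : ℂ | -π < w.im ∧ w.im < 0}
  set U₃ : Set ℂ := {w : ℂ | w.im < -π}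
  have hU₀ : IsPreconnected U₀ := (convex_halfSpace_re_lt (1/2)).isPreconnected
  have hU₁ : IsPreconnected U₁ := (convex_halfSpace_im_gt 0).isPreconnected
  have hU₂ : IsPreconnected U₂ := by
    have : U₂ = {w : ℂ | -π < w.im} ∩ {w : ℂ | w.im < 0} := rfl
    rw [this]
    exact ((convex_halfSpace_im_gt (-π)).inter (convex_halfSpace_im_lt 0)).isPreconnected
  have hU₃ : IsPreconnected U₃ := (convex_halfSpace_im_lt (-π)).isPreconnected
  have hπ : (0:ℝ) < π := Real.pi_pos
  have h01 : IsPreconnected (U₀ ∪ U₁) := by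
    apply hU₀.union (-1 + Complex.I)
    · show (-1 + Complex.I).re < 1/2; simp; norm_num
    · show 0 < (-1 + Complex.I).im; simp
    · exact hU₁
  have h012 : IsPreconnected (U₀ ∪ U₁ ∪ U₂) := by
    apply h01.union (⟨-1, -(π/2)⟩ : ℂ)
    · left
      show (-1:ℝ) < 1/2; norm_num
    · exact ⟨show -π < -(π/2) by linarith, show -(π/2) < 0 by linarith⟩
    · exact hU₂
  have h0123 : IsPreconnected (U₀ ∪ U₁ ∪ U₂ ∪ U₃) := by
    apply h012.union (⟨-1, -(π+1)⟩ : ℂ)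
    · left; left
      show (-1:ℝ) < 1/2; norm_num
    · show -(π+1) < -π; linarith
    · exact hU₃
  have heq : Set.univ \ ({w : ℂ | w.im = 0 ∧ 1 / 2 ≤ w.re} ∪
      {w : ℂ | w.im = -Real.pi ∧ 1 / 2 ≤ w.re}) = U₀ ∪ U₁ ∪ U₂ ∪ U₃ := by
    ext w
    simp only [Set.mem_diff, Set.mem_univ, true_and, Set.mem_union, Set.mem_setOf_eq,
      not_or, not_and]
    constructor
    · rintro ⟨h1, h2⟩
      by_cases him0 : w.im = 0
      · left; left; left; exact not_le.1 (h1 him0)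
      by_cases himπ : w.im = -π
      · left; left; left; exact not_le.1 (h2 himπ)
      rcases lt_trichotomy w.im 0 with h | h | h
      · rcases lt_trichotomy w.im (-π) with h' | h' | h'
        · right; exact h'
        · exact absurd h' himπ
        · left; right; exact ⟨h', h⟩
      · exact absurd h him0
      · left; left; right; exact h
    · rintro (((h | h) | h) | h)
      · have hh : w.re < 1/2 := h
        exact ⟨fun _ => by linarith, fun _ => by linarith⟩
      · have hh : 0 < w.im := h
        exact ⟨fun h' => by linarith, fun h' => by linarith⟩
      · obtain ⟨ha, hb⟩ : -π < w.im ∧ w.im < 0 := h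
        exact ⟨fun h' => by linarith, fun h' => by linarith⟩
      · have hh : w.im < -π := h
        exact ⟨fun h' => by linarith, fun h' => by linarith⟩
  rw [heq]
  exact h0123

noncomputable abbrev Sset : Set ℂ := Set.univ \ ({w : ℂ | w.im = 0 ∧ 1 / 2 ≤ w.re} ∪
    {w : ℂ | w.im = -Real.pi ∧ 1 / 2 ≤ w.re})

lemma Hopen : IsOpen {z : ℂ | 0 < z.im} := isOpen_lt continuous_const Complex.continuous_im

lemma T_subset_S : Psi '' {z : ℂ | 0 < z.im} ⊆ Sset := by
  rintro _ ⟨z, hz, rfl⟩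
  refine ⟨Set.mem_univ _, ?_⟩
  rintro (⟨h1, h2⟩ | ⟨h1, h2⟩)
  · exact absurd h2 (not_le.2 ((psi_forward hz).1 h1))
  · exact absurd h2 (not_le.2 ((psi_forward hz).2 h1))

lemma T_open : IsOpen (Psi '' {z : ℂ | 0 < z.im}) := by
  have han : AnalyticOnNhd ℂ Psi {z : ℂ | 0 < z.im} := by
    apply DifferentiableOn.analyticOnNhd _ Hopen
    intro z hz
    exact (psi_hasDerivAt (ne_of_gt hz)).differentiableAt.differentiableWithinAt
  have hpc : IsPreconnected {z : ℂ | 0 < z.im} := (convex_halfSpace_im_gt 0).isPreconnected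
  rcases han.is_constant_or_isOpen hpc with ⟨w, hw⟩ | h
  · exfalso
    have h1 : Complex.I ∈ {z : ℂ | 0 < z.im} := by simp
    have h2 : (2*Complex.I) ∈ {z : ℂ | 0 < z.im} := by simp
    have heq := psi_injOn h1 h2 (by rw [hw _ h1, hw _ h2])
    have h3 := congrArg Complex.im heq
    simp at h3
  · exact h _ (le_refl _) Hopen

lemma T_rel_closed : closure (Psi '' {z : ℂ | 0 < z.im}) ∩ Sset ⊆ Psi '' {z : ℂ | 0 < z.im} := by
  rintro w ⟨hwc, hwS⟩
  set B : ℝ := ‖w‖ + 1 with hB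
  have hB1 : 1 ≤ B := by
    rw [hB]
    linarith [norm_nonneg w]
  set ε : ℝ := Real.exp (-(B+2)) with hε
  set M : ℝ := 2*B + 2*π + 2 with hM
  set K : Set ℂ := ({z : ℂ | ε ≤ ‖z‖} ∩ {z : ℂ | ‖z‖ ≤ M}) ∩
    {z : ℂ | 0 ≤ z.im} with hK
  have hKne : ∀ z ∈ K, z ≠ 0 ∧ 0 ≤ z.im := by
    rintro z ⟨⟨h1, _⟩, h3⟩
    refine ⟨?_, h3⟩
    intro h0
    rw [h0] at h1
    simp only [Set.mem_setOf_eq, norm_zero] at h1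
    have : (0:ℝ) < ε := Real.exp_pos _
    linarith
  have hball : Psi '' {z : ℂ | 0 < z.im} ∩ Metric.ball w 1 ⊆
      Psi '' (K ∩ {z : ℂ | 0 < z.im}) := by
    rintro _ ⟨⟨z, hz, rfl⟩, hb⟩
    have hz0 : z ≠ 0 := fun h => by simp [h] at hz
    have habs : ‖Psi z‖ < B := by
      have hd : ‖Psi z - w‖ < 1 := by
        rw [← Complex.dist_eq]
        exact Metric.mem_ball.1 hb
      have := norm_sub_norm_le (Psi z) w
      have h2 := norm_sub_rev w (Psi z)
      linarith [norm_sub_norm_le (Psi z) w]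
    refine ⟨z, ⟨⟨⟨?_, ?_⟩, show (0:ℝ) ≤ z.im from hz.le⟩, hz⟩, rfl⟩
    · show ε ≤ ‖z‖
      by_contra h
      push_neg at h
      exact absurd (psi_small hB1 hz0 h.le) (by linarith)
    · show ‖z‖ ≤ M
      by_contra h
      push_neg at h
      exact absurd (psi_large hB1 h.le) (by linarith)
  have hKclosed : IsClosed K := by
    apply IsClosed.inter
    · exact IsClosed.inter (isClosed_le continuous_const continuous_norm)
        (isClosed_le continuous_norm continuous_const)
    · exact isClosed_le continuous_const Complex.continuous_im
  have hKcomp : IsCompact K := by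
    apply IsCompact.of_isClosed_subset (isCompact_closedBall (0:ℂ) M) hKclosed
    rintro z ⟨⟨_, h2⟩, _⟩
    rw [Metric.mem_closedBall, Complex.dist_eq, sub_zero]
    exact h2
  have hPsiK : IsCompact (Psi '' K) := hKcomp.image_of_continuousOn (psi_continuousOn hKne)
  have hwK : w ∈ Psi '' K := by
    have h1 : w ∈ closure (Psi '' {z : ℂ | 0 < z.im} ∩ Metric.ball w 1) :=
      Metric.isOpen_ball.closure_inter ⟨hwc, Metric.mem_ball_self one_pos⟩
    have h2 : closure (Psi '' {z : ℂ | 0 < z.im} ∩ Metric.ball w 1) ⊆ Psi '' K := by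
      rw [← hPsiK.isClosed.closure_eq]
      apply closure_mono
      exact hball.trans (Set.image_mono (Set.inter_subset_left))
    exact h2 h1
  obtain ⟨z₀, hz₀K, hz₀⟩ := hwK
  rcases lt_or_eq_of_le (hKne z₀ hz₀K).2 with him | him
  · exact ⟨z₀, him, hz₀⟩
  · exfalso
    have hz₀0 : z₀ ≠ 0 := (hKne z₀ hz₀K).1
    have hx0 : z₀.re ≠ 0 := by
      intro h
      exact hz₀0 (Complex.ext h him.symm)
    have hz₀eq : z₀ = ((z₀.re : ℝ) : ℂ) := Complex.ext (by simp) (by simp [← him])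
    rcases hx0.lt_or_gt with hx | hx
    · -- negative real axis : w on second line
      have harg : Complex.arg z₀ = π := Complex.arg_eq_pi_iff.2 ⟨hx, him.symm⟩
      have him' : w.im = -π := by
        rw [← hz₀, psi_im_eq, harg, ← him]
        ring
      have habs : ‖z₀‖ = -z₀.re := by
        conv_lhs => rw [hz₀eq]
        rw [Complex.norm_real, Real.norm_eq_abs, _root_.abs_of_neg hx]
      have hre' : 1/2 ≤ w.re := by
        rw [← hz₀, psi_re_eq, ← him, habs]
        have h5 := real_bound (show (0:ℝ) < -z₀.re by linarith)
        nlinarith [h5]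
      exact hwS.2 (Or.inr ⟨him', hre'⟩)
    · -- positive real axis : w on first line
      have harg : Complex.arg z₀ = 0 := by
        rw [hz₀eq]
        exact Complex.arg_ofReal_of_nonneg hx.le
      have him' : w.im = 0 := by
        rw [← hz₀, psi_im_eq, harg, ← him]
        ring
      have habs : ‖z₀‖ = z₀.re := by
        conv_lhs => rw [hz₀eq]
        rw [Complex.norm_real, Real.norm_eq_abs, _root_.abs_of_pos hx]
      have hre' : 1/2 ≤ w.re := by
        rw [← hz₀, psi_re_eq, ← him, habs]
        have h5 := real_bound hx
        nlinarith [h5]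
      exact hwS.2 (Or.inl ⟨him', hre'⟩)

/-- Ψ(z) = z²/2 - log z is univalent on ℂ⁺ with image the plane minus
two horizontal half-lines. -/
theorem sq_half_sub_log_injOn_image :
    Set.InjOn (fun z : ℂ => z ^ 2 / 2 - Complex.log z) {z : ℂ | 0 < z.im} ∧
    (fun z : ℂ => z ^ 2 / 2 - Complex.log z) '' {z : ℂ | 0 < z.im} =
      Set.univ \ ({w : ℂ | w.im = 0 ∧ 1 / 2 ≤ w.re} ∪
                  {w : ℂ | w.im = -Real.pi ∧ 1 / 2 ≤ w.re}) := by
  constructor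
  · exact psi_injOn
  · apply Set.Subset.antisymm
    · exact T_subset_S
    · apply S_preconnected.subset_of_closure_inter_subset T_open
      · have hI : Complex.I ∈ {z : ℂ | 0 < z.im} := by simp
        exact ⟨Psi Complex.I, T_subset_S (Set.mem_image_of_mem _ hI),
          Set.mem_image_of_mem _ hI⟩
      · exact T_rel_closed
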